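/- If fractional q-partitions ρ^{(n)} converge to ρ over rational intervals, then limsup_{n→∞} Ent(ρ^{(n)}) ≤ Ent(ρ), where Ent(ρ) = ∫₀¹ ∑_i (-ρ_i log ρ_i). -/

import Mathlib

open MeasureTheory Filter

/-- A fractional `q`-partition of `[0,1]`. -/
def IsFracPartition (q : ℕ) (ρ : Fin q → ℝ → ℝ) : Prop :=
  (∀ i, Measurable (ρ i)) ∧ (∀ i x, ρ i x ∈ Set.Icc (0:ℝ) 1) ∧
    (∀ x, ∑ i, ρ i x = 1)

/-- Entropy of a fractional partition. -/
noncomputable def Ent (q : ℕ) (ρ : Fin q → ℝ → ℝ) : ℝ :=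
  ∫ x in Set.Icc (0:ℝ) 1, ∑ i, -(ρ i x) * Real.log (ρ i x)

noncomputable def Em (q m : ℕ) (σ : Fin q → ℝ → ℝ) : ℝ :=
  ∑ j ∈ Finset.range (2^m), ((2:ℝ)^m)⁻¹ *
    ∑ i, Real.negMulLog ((2:ℝ)^m * ∫ t in Set.Icc ((j:ℝ)/2^m) (((j:ℝ)+1)/2^m), σ i t)

lemma myIntegrableOn {f : ℝ → ℝ} (hm : Measurable f) {C : ℝ} (hb : ∀ x, |f x| ≤ C)
    {s : Set ℝ} (hs : volume s < ⊤) : IntegrableOn f s := by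
  have : IsFiniteMeasure (volume.restrict s) :=
    ⟨by rwa [Measure.restrict_apply_univ]⟩
  exact ⟨hm.aestronglyMeasurable, HasFiniteIntegral.of_bounded
    (C := C) (ae_of_all _ fun x => by rw [Real.norm_eq_abs]; exact hb x)⟩


lemma negMulLog_mem {t : ℝ} (h0 : 0 ≤ t) (h1 : t ≤ 1) : Real.negMulLog t ∈ Set.Icc (0:ℝ) 1 := by
  refine ⟨Real.negMulLog_nonneg h0 h1, ?_⟩
  rcases eq_or_lt_of_le h0 with h | h
  · simp [← h]
  · have hlog : Real.log t⁻¹ ≤ t⁻¹ - 1 := Real.log_le_sub_one_of_pos (by positivity)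
    have : Real.negMulLog t = t * Real.log t⁻¹ := by
      rw [Real.log_inv, Real.negMulLog]; ring
    rw [this]
    calc t * Real.log t⁻¹ ≤ t * (t⁻¹ - 1) := by
          exact mul_le_mul_of_nonneg_left hlog h0
      _ = 1 - t := by field_simp
      _ ≤ 1 := by linarith

lemma Ico_eq_biUnion (K : ℕ) (hK : 0 < K) :
    Set.Ico (0:ℝ) 1 = ⋃ j ∈ Finset.range K, Set.Ico ((j:ℝ)/K) (((j:ℝ)+1)/K) := by
  have hKpos : (0:ℝ) < K := Nat.cast_pos.2 hK
  ext x
  simp only [Set.mem_iUnion, Finset.mem_range, Set.mem_Ico, exists_prop]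
  constructor
  · rintro ⟨hx0, hx1⟩
    refine ⟨⌊(K:ℝ) * x⌋₊, ?_, ?_, ?_⟩
    · rw [Nat.floor_lt (by positivity)]
      calc (K:ℝ) * x < K * 1 := by nlinarith
        _ = K := by ring
    · rw [div_le_iff₀ hKpos, mul_comm]
      exact Nat.floor_le (by positivity)
    · rw [lt_div_iff₀ hKpos, mul_comm]
      exact Nat.lt_floor_add_one _
  · rintro ⟨j, hj, hx1, hx2⟩
    have hj' : ((j:ℝ)+1) ≤ K := by exact_mod_cast Nat.succ_le_of_lt hj
    constructor
    · exact le_trans (by positivity) hx1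
    · calc x < ((j:ℝ)+1)/K := hx2
        _ ≤ K/(K:ℝ) := by gcongr
        _ = 1 := div_self (ne_of_gt hKpos)


lemma integral_Ico_split (K : ℕ) (hK : 0 < K) (g : ℝ → ℝ)
    (hg : IntegrableOn g (Set.Ico (0:ℝ) 1)) :
    ∫ x in Set.Ico (0:ℝ) 1, g x
      = ∑ j ∈ Finset.range K, ∫ x in Set.Ico ((j:ℝ)/K) (((j:ℝ)+1)/K), g x := by
  rw [Ico_eq_biUnion K hK] at hg ⊢
  refine integral_biUnion_finset _ (fun i _ => measurableSet_Ico) ?_ (fun i _ => hg.mono_set ?_)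
  · intro a ha b hb hab
    simp only [Function.onFun, Set.Ico_disjoint_Ico]
    simp only [Finset.mem_coe, Finset.mem_range] at ha hb
    have hKpos : (0:ℝ) < K := Nat.cast_pos.2 hK
    rcases hab.lt_or_gt with h | h
    · have : ((a:ℝ)+1) ≤ b := by exact_mod_cast h
      calc min (((a:ℝ)+1)/K) (((b:ℝ)+1)/K) ≤ ((a:ℝ)+1)/K := min_le_left _ _
        _ ≤ (b:ℝ)/K := by gcongr
        _ ≤ max ((a:ℝ)/K) ((b:ℝ)/K) := le_max_right _ _
    · have : ((b:ℝ)+1) ≤ a := by exact_mod_cast h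
      calc min (((a:ℝ)+1)/K) (((b:ℝ)+1)/K) ≤ ((b:ℝ)+1)/K := min_le_right _ _
        _ ≤ (a:ℝ)/K := by gcongr
        _ ≤ max ((a:ℝ)/K) ((b:ℝ)/K) := le_max_left _ _
  · intro x hx; simp only [Set.mem_iUnion, exists_prop]; exact ⟨i, by assumption, hx⟩


lemma jensen_Ico {f : ℝ → ℝ} (hm : Measurable f) (hf : ∀ x, f x ∈ Set.Icc (0:ℝ) 1)
    {a b : ℝ} (hab : a < b) :
    ∫ x in Set.Ico a b, Real.negMulLog (f x)
      ≤ (b - a) * Real.negMulLog ((b - a)⁻¹ * ∫ x in Set.Ico a b, f x) := by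
  have hvol : volume (Set.Ico a b) = ENNReal.ofReal (b - a) := Real.volume_Ico
  have hvolfin : volume (Set.Ico a b) < ⊤ := by rw [hvol]; exact ENNReal.ofReal_lt_top
  have hfi : IntegrableOn f (Set.Ico a b) := myIntegrableOn hm (C := 1)
    (fun x => abs_le.2 ⟨by linarith [(hf x).1], (hf x).2⟩) hvolfin
  have hgi : IntegrableOn (Real.negMulLog ∘ f) (Set.Ico a b) :=
    myIntegrableOn (Real.continuous_negMulLog.measurable.comp hm) (C := 1)
      (fun x => by
        simp only [Function.comp_apply]
        exact abs_le.2 ⟨by linarith [(negMulLog_mem (hf x).1 (hf x).2).1],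
          (negMulLog_mem (hf x).1 (hf x).2).2⟩) hvolfin
  have key := Real.concaveOn_negMulLog.le_map_set_average
    (Real.continuous_negMulLog.continuousOn) isClosed_Ici
    (t := Set.Ico a b) (μ := volume)
    (by rw [hvol]; simpa using by linarith)
    hvolfin.ne
    (ae_of_all _ fun x => (hf x).1) hfi hgi
  have htr : (volume (Set.Ico a b)).toReal = b - a := by
    rw [hvol, ENNReal.toReal_ofReal (by linarith)]
  rw [setAverage_eq, setAverage_eq, measureReal_def, htr] at key
  have hba : (0:ℝ) < b - a := by linarith
  calc ∫ x in Set.Ico a b, Real.negMulLog (f x)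
      = (b-a) * ((b-a)⁻¹ • ∫ x in Set.Ico a b, (Real.negMulLog ∘ f) x) := by
        rw [smul_eq_mul]; field_simp; rfl
    _ ≤ (b-a) * Real.negMulLog ((b - a)⁻¹ • ∫ x in Set.Ico a b, f x) := by
        apply mul_le_mul_of_nonneg_left key hba.le
    _ = (b - a) * Real.negMulLog ((b - a)⁻¹ * ∫ x in Set.Ico a b, f x) := by
        rw [smul_eq_mul]


lemma sum_negMulLog_bound {q : ℕ} {σ : Fin q → ℝ → ℝ}
    (hb : ∀ i x, σ i x ∈ Set.Icc (0:ℝ) 1) (x : ℝ) :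
    |∑ i, Real.negMulLog (σ i x)| ≤ (q:ℝ) := by
  calc |∑ i, Real.negMulLog (σ i x)| ≤ ∑ i, |Real.negMulLog (σ i x)| :=
        Finset.abs_sum_le_sum_abs _ _
    _ ≤ ∑ _i : Fin q, (1:ℝ) := by
        apply Finset.sum_le_sum
        intro i _
        have := negMulLog_mem (hb i x).1 (hb i x).2
        rw [abs_le]; exact ⟨by linarith [this.1], this.2⟩
    _ = (q:ℝ) := by simp


lemma ent_integrand_integrableOn {q : ℕ} {σ : Fin q → ℝ → ℝ}
    (hσm : ∀ i, Measurable (σ i)) (hb : ∀ i x, σ i x ∈ Set.Icc (0:ℝ) 1)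
    {s : Set ℝ} (hs : volume s < ⊤) :
    IntegrableOn (fun x => ∑ i, Real.negMulLog (σ i x)) s := by
  refine myIntegrableOn ?_ (sum_negMulLog_bound hb) hs
  exact Finset.measurable_sum _ fun i _ =>
    Real.continuous_negMulLog.measurable.comp (hσm i)


lemma ent_le_Em (q m : ℕ) (σ : Fin q → ℝ → ℝ) (hσ : IsFracPartition q σ) :
    Ent q σ ≤ Em q m σ := by
  obtain ⟨hσm, hσb, -⟩ := hσ
  have h2m : (0:ℝ) < 2^m := by positivity
  have hEnt : Ent q σ = ∫ x in Set.Ico (0:ℝ) 1, ∑ i, Real.negMulLog (σ i x) := by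
    rw [Ent]
    exact (setIntegral_congr_set Ico_ae_eq_Icc).symm
  have hvolIco : ∀ a b : ℝ, volume (Set.Ico a b) < ⊤ := by
    intro a b; rw [Real.volume_Ico]; exact ENNReal.ofReal_lt_top
  rw [hEnt, integral_Ico_split (2^m) (pow_pos (by norm_num) _)
    _ (ent_integrand_integrableOn hσm hσb (hvolIco 0 1))]
  push_cast
  rw [Em]
  apply Finset.sum_le_sum
  intro j hj
  have hab : ((j:ℝ)/2^m) < ((j:ℝ)+1)/2^m := by
    rw [div_lt_div_iff₀ h2m h2m]; nlinarith
  have hba : (((j:ℝ)+1)/2^m) - ((j:ℝ)/2^m) = ((2:ℝ)^m)⁻¹ := by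
    field_simp; ring
  have hint : ∀ i : Fin q, IntegrableOn (fun x => Real.negMulLog (σ i x))
      (Set.Ico ((j:ℝ)/2^m) (((j:ℝ)+1)/2^m)) := by
    intro i
    refine myIntegrableOn (Real.continuous_negMulLog.measurable.comp (hσm i)) (C := 1)
      (fun x => ?_) (hvolIco _ _)
    simp only [Function.comp_apply]
    have := negMulLog_mem (hσb i x).1 (hσb i x).2
    rw [abs_le]; exact ⟨by linarith [this.1], this.2⟩
  calc ∫ x in Set.Ico ((j:ℝ)/2^m) (((j:ℝ)+1)/2^m), ∑ i, Real.negMulLog (σ i x)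
      = ∑ i, ∫ x in Set.Ico ((j:ℝ)/2^m) (((j:ℝ)+1)/2^m), Real.negMulLog (σ i x) :=
        integral_finset_sum _ (fun i _ => hint i)
    _ ≤ ∑ i, ((2:ℝ)^m)⁻¹ * Real.negMulLog ((2:ℝ)^m *
          ∫ t in Set.Icc ((j:ℝ)/2^m) (((j:ℝ)+1)/2^m), σ i t) := by
        apply Finset.sum_le_sum
        intro i _
        have hj := jensen_Ico (hσm i) (hσb i) hab
        rw [hba, inv_inv] at hj
        rwa [show (∫ x in Set.Ico ((j:ℝ)/2^m) (((j:ℝ)+1)/2^m), σ i x)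
          = ∫ t in Set.Icc ((j:ℝ)/2^m) (((j:ℝ)+1)/2^m), σ i t
          from setIntegral_congr_set Ico_ae_eq_Icc] at hj
    _ = ((2:ℝ)^m)⁻¹ * ∑ i, Real.negMulLog ((2:ℝ)^m *
          ∫ t in Set.Icc ((j:ℝ)/2^m) (((j:ℝ)+1)/2^m), σ i t) := by
        rw [Finset.mul_sum]


lemma Em_tendsto (q m : ℕ) (ρs : ℕ → Fin q → ℝ → ℝ) (ρ : Fin q → ℝ → ℝ)
    (hconv : ∀ (i : Fin q) (a b : ℚ), 0 ≤ a → (b : ℚ) ≤ 1 →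
      Tendsto (fun n => ∫ x in Set.Icc (a : ℝ) (b : ℝ), ρs n i x) atTop
        (nhds (∫ x in Set.Icc (a : ℝ) (b : ℝ), ρ i x))) :
    Tendsto (fun n => Em q m (ρs n)) atTop (nhds (Em q m ρ)) := by
  unfold Em
  apply tendsto_finset_sum
  intro j hj
  apply Tendsto.const_mul
  apply tendsto_finset_sum
  intro i _
  have hb1 : ((j:ℚ)+1)/2^m ≤ 1 := by
    rw [div_le_one (by positivity)]
    exact_mod_cast Nat.succ_le_of_lt (Finset.mem_range.1 hj)
  have hconv' := hconv i ((j:ℚ)/2^m) (((j:ℚ)+1)/2^m) (by positivity) hb1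
  have e1 : ((((j:ℚ)/2^m) : ℚ) : ℝ) = (j:ℝ)/2^m := by push_cast; ring
  have e2 : (((((j:ℚ)+1)/2^m) : ℚ) : ℝ) = ((j:ℝ)+1)/2^m := by push_cast; ring
  rw [e1, e2] at hconv'
  exact (Real.continuous_negMulLog.tendsto _).comp (hconv'.const_mul ((2:ℝ)^m))


lemma ae_tendsto_dyadic {f : ℝ → ℝ} (hm : Measurable f) (hb : ∀ x, |f x| ≤ 1) :
    ∀ᵐ x, x ∈ Set.Ico (0:ℝ) 1 →
      Tendsto (fun m : ℕ => (2:ℝ)^m *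
          ∫ t in Set.Icc ((⌊(2:ℝ)^m * x⌋₊:ℝ)/2^m) (((⌊(2:ℝ)^m * x⌋₊:ℝ)+1)/2^m), f t)
        atTop (nhds (f x)) := by
  have hf : LocallyIntegrable f volume := by
    rw [locallyIntegrable_iff]
    exact fun k hk => myIntegrableOn hm hb hk.measure_lt_top
  filter_upwards [IsUnifLocDoublingMeasure.ae_tendsto_average (μ := volume) hf 1] with x hx hmem
  set j : ℕ → ℕ := fun m => ⌊(2:ℝ)^m * x⌋₊ with hj
  set w : ℕ → ℝ := fun m => ((j m : ℝ) + 2⁻¹)/2^m with hw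
  set δ : ℕ → ℝ := fun m => ((2:ℝ)^m)⁻¹ * 2⁻¹ with hδ
  have hIcc : ∀ m : ℕ, Metric.closedBall (w m) (δ m)
      = Set.Icc ((j m:ℝ)/2^m) (((j m:ℝ)+1)/2^m) := by
    intro m
    rw [Real.closedBall_eq_Icc]
    have h2m : (2:ℝ)^m ≠ 0 := by positivity
    have e1 : w m - δ m = (j m:ℝ)/2^m := by
      simp only [hw, hδ]
      field_simp
      ring
    have e2 : w m + δ m = ((j m:ℝ)+1)/2^m := by
      simp only [hw, hδ]
      field_simp
      ring
    rw [e1, e2]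
  have hxm : ∀ m : ℕ, (j m : ℝ) ≤ (2:ℝ)^m * x ∧ (2:ℝ)^m * x < (j m : ℝ) + 1 := by
    intro m
    exact ⟨Nat.floor_le (mul_nonneg (by positivity) hmem.1), Nat.lt_floor_add_one _⟩
  have h2m : ∀ m : ℕ, (0:ℝ) < 2^m := fun m => by positivity
  have hmemIcc : ∀ m : ℕ, x ∈ Set.Icc ((j m:ℝ)/2^m) (((j m:ℝ)+1)/2^m) := by
    intro m
    constructor
    · rw [div_le_iff₀ (h2m m)]
      have := (hxm m).1; linarith [this]
    · rw [le_div_iff₀ (h2m m)]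
      have := (hxm m).2; linarith [this]
  have δlim : Tendsto δ atTop (nhdsWithin 0 (Set.Ioi 0)) := by
    apply tendsto_nhdsWithin_of_tendsto_nhds_of_eventually_within
    · have : Tendsto (fun m : ℕ => ((2:ℝ)⁻¹)^m * 2⁻¹) atTop (nhds (0 * 2⁻¹)) :=
        (tendsto_pow_atTop_nhds_zero_of_lt_one (by norm_num) (by norm_num)).mul_const _
      rw [zero_mul] at this
      refine this.congr fun m => by rw [hδ, inv_pow]
    · exact Eventually.of_forall fun m => by simp only [hδ, Set.mem_Ioi]; positivity
  have xmem : ∀ᶠ m : ℕ in atTop, x ∈ Metric.closedBall (w m) (1 * δ m) := by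
    refine Eventually.of_forall fun m => ?_
    rw [one_mul, hIcc m]
    exact hmemIcc m
  have key := hx w δ δlim xmem
  refine Tendsto.congr (fun m => ?_) key
  rw [hIcc m, setAverage_eq, smul_eq_mul]
  congr 1
  rw [measureReal_def, Real.volume_Icc]
  have : ((j m:ℝ)+1)/2^m - (j m:ℝ)/2^m = ((2:ℝ)^m)⁻¹ := by field_simp; ring
  rw [this, ENNReal.toReal_ofReal (by positivity), inv_inv]


lemma Em_tendsto_Ent (q : ℕ) (ρ : Fin q → ℝ → ℝ) (hρ : IsFracPartition q ρ) :
    Tendsto (fun m => Em q m ρ) atTop (nhds (Ent q ρ)) := by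
  obtain ⟨hρm, hρb, -⟩ := hρ
  have habs : ∀ i x, |ρ i x| ≤ 1 := fun i x =>
    abs_le.2 ⟨by linarith [(hρb i x).1], (hρb i x).2⟩
  -- the dyadic average step functions
  set step : ℕ → Fin q → ℝ → ℝ := fun m i x => (2:ℝ)^m *
    ∫ t in Set.Icc ((⌊(2:ℝ)^m * x⌋₊:ℝ)/2^m) (((⌊(2:ℝ)^m * x⌋₊:ℝ)+1)/2^m), ρ i t with hstep
  have h2m : ∀ m : ℕ, (0:ℝ) < 2^m := fun m => by positivity
  have hIccvol : ∀ (m : ℕ) (j : ℕ),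
      volume (Set.Icc ((j:ℝ)/2^m) (((j:ℝ)+1)/2^m)) = ENNReal.ofReal (((2:ℝ)^m)⁻¹) := by
    intro m j
    rw [Real.volume_Icc]
    congr 1
    field_simp; ring
  -- step functions take values in [0,1]
  have hstepmem : ∀ m i x, step m i x ∈ Set.Icc (0:ℝ) 1 := by
    intro m i x
    constructor
    · apply mul_nonneg (h2m m).le
      exact setIntegral_nonneg measurableSet_Icc fun t _ => (hρb i t).1
    · have hnorm : ‖∫ t in Set.Icc ((⌊(2:ℝ)^m * x⌋₊:ℝ)/2^m) (((⌊(2:ℝ)^m * x⌋₊:ℝ)+1)/2^m), ρ i t‖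
          ≤ 1 * (volume (Set.Icc ((⌊(2:ℝ)^m * x⌋₊:ℝ)/2^m) (((⌊(2:ℝ)^m * x⌋₊:ℝ)+1)/2^m))).toReal := by
        apply norm_setIntegral_le_of_norm_le_const (by rw [hIccvol]; exact ENNReal.ofReal_lt_top)
        intro t _
        rw [Real.norm_eq_abs]; exact habs i t
      rw [hIccvol, ENNReal.toReal_ofReal (by positivity), one_mul, Real.norm_eq_abs] at hnorm
      have := (abs_le.1 hnorm).2
      calc step m i x ≤ (2:ℝ)^m * ((2:ℝ)^m)⁻¹ := by
            exact mul_le_mul_of_nonneg_left this (h2m m).le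
        _ = 1 := mul_inv_cancel₀ (h2m m).ne'
  -- measurability of step functions
  have hstepmeas : ∀ m i, Measurable (step m i) := by
    intro m i
    apply Measurable.const_mul
    exact (measurable_from_top (f := fun j : ℕ =>
        ∫ t in Set.Icc ((j:ℝ)/2^m) (((j:ℝ)+1)/2^m), ρ i t)).comp
      (Nat.measurable_floor.comp (measurable_const_mul _))
  -- Em equals the integral of entropy of the step function
  have hEm : ∀ m, Em q m ρ = ∫ x in Set.Ico (0:ℝ) 1, ∑ i, Real.negMulLog (step m i x) := by
    intro m
    have hGmeas : Measurable fun x => ∑ i, Real.negMulLog (step m i x) :=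
      Finset.measurable_sum _ fun i _ =>
        Real.continuous_negMulLog.measurable.comp (hstepmeas m i)
    have hGb : ∀ x, |∑ i, Real.negMulLog (step m i x)| ≤ (q:ℝ) := by
      intro x
      calc |∑ i, Real.negMulLog (step m i x)| ≤ ∑ i, |Real.negMulLog (step m i x)| :=
            Finset.abs_sum_le_sum_abs _ _
        _ ≤ ∑ _i : Fin q, (1:ℝ) := Finset.sum_le_sum fun i _ => by
            have := negMulLog_mem (hstepmem m i x).1 (hstepmem m i x).2
            rw [abs_le]; exact ⟨by linarith [this.1], this.2⟩
        _ = (q:ℝ) := by simp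
    rw [integral_Ico_split (2^m) (pow_pos (by norm_num) _) _
      (myIntegrableOn hGmeas hGb (by rw [Real.volume_Ico]; exact ENNReal.ofReal_lt_top))]
    rw [Em]
    push_cast
    apply Finset.sum_congr rfl
    intro j hj
    have hfl : ∀ x ∈ Set.Ico ((j:ℝ)/2^m) (((j:ℝ)+1)/2^m), ⌊(2:ℝ)^m * x⌋₊ = j := by
      intro x hx
      have hx1 : (j:ℝ) ≤ (2:ℝ)^m * x := by
        have := hx.1
        rw [div_le_iff₀ (h2m m)] at this
        linarith
      have hx2 : (2:ℝ)^m * x < (j:ℝ) + 1 := by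
        have := hx.2
        rw [lt_div_iff₀ (h2m m)] at this
        linarith
      rw [Nat.floor_eq_iff (le_trans (by positivity) hx1)]
      exact ⟨by exact_mod_cast hx1, by exact_mod_cast hx2⟩
    rw [setIntegral_congr_fun measurableSet_Ico (g := fun _ =>
        ∑ i, Real.negMulLog ((2:ℝ)^m * ∫ t in Set.Icc ((j:ℝ)/2^m) (((j:ℝ)+1)/2^m), ρ i t))
      (fun x hx => by simp only [hstep, hfl x hx])]
    rw [setIntegral_const, measureReal_def, Real.volume_Ico, smul_eq_mul]
    congr 1
    rw [show ((j:ℝ)+1)/2^m - (j:ℝ)/2^m = ((2:ℝ)^m)⁻¹ by field_simp; ring,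
      ENNReal.toReal_ofReal (by positivity)]
  -- Ent as an integral over Ico
  have hEnt : Ent q ρ = ∫ x in Set.Ico (0:ℝ) 1, ∑ i, Real.negMulLog (ρ i x) := by
    rw [Ent]
    exact (setIntegral_congr_set Ico_ae_eq_Icc).symm
  rw [hEnt]
  have := Fact.mk (show volume (Set.Ico (0:ℝ) 1) < ⊤ by
    rw [Real.volume_Ico]; exact ENNReal.ofReal_lt_top)
  refine Tendsto.congr (fun m => (hEm m).symm) ?_
  apply tendsto_integral_of_dominated_convergence (bound := fun _ => (q:ℝ))
  · intro m
    exact (Finset.measurable_sum _ fun i _ =>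
      Real.continuous_negMulLog.measurable.comp (hstepmeas m i)).aestronglyMeasurable
  · exact integrable_const _
  · intro m
    refine Eventually.of_forall fun x => ?_
    rw [Real.norm_eq_abs]
    calc |∑ i, Real.negMulLog (step m i x)| ≤ ∑ i, |Real.negMulLog (step m i x)| :=
          Finset.abs_sum_le_sum_abs _ _
      _ ≤ ∑ _i : Fin q, (1:ℝ) := Finset.sum_le_sum fun i _ => by
          have := negMulLog_mem (hstepmem m i x).1 (hstepmem m i x).2
          rw [abs_le]; exact ⟨by linarith [this.1], this.2⟩
      _ = (q:ℝ) := by simp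
  · have H : ∀ᵐ x ∂volume, ∀ i : Fin q, x ∈ Set.Ico (0:ℝ) 1 →
        Tendsto (fun m => step m i x) atTop (nhds (ρ i x)) :=
      ae_all_iff.2 fun i => ae_tendsto_dyadic (hρm i) (habs i)
    filter_upwards [ae_restrict_of_ae H, ae_restrict_mem measurableSet_Ico] with x hx hxmem
    apply tendsto_finset_sum
    intro i _
    exact (Real.continuous_negMulLog.tendsto _).comp (hx i hxmem)

/-- Upper semicontinuity of entropy along convergence over rational intervals. -/
theorem stmt14 (q : ℕ) (ρs : ℕ → Fin q → ℝ → ℝ) (ρ : Fin q → ℝ → ℝ)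
    (hs : ∀ n, IsFracPartition q (ρs n)) (hρ : IsFracPartition q ρ)
    (hconv : ∀ (i : Fin q) (a b : ℚ), 0 ≤ a → (b : ℚ) ≤ 1 →
      Tendsto (fun n => ∫ x in Set.Icc (a : ℝ) (b : ℝ), ρs n i x) atTop
        (nhds (∫ x in Set.Icc (a : ℝ) (b : ℝ), ρ i x))) :
    limsup (fun n => Ent q (ρs n)) atTop ≤ Ent q ρ := by
  have hEnt0 : ∀ n, (0:ℝ) ≤ Ent q (ρs n) := by
    intro n
    apply setIntegral_nonneg measurableSet_Icc
    intro x _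
    apply Finset.sum_nonneg
    intro i _
    have h := (hs n).2.1 i x
    exact Real.negMulLog_nonneg h.1 h.2
  have key : ∀ m : ℕ, limsup (fun n => Ent q (ρs n)) atTop ≤ Em q m ρ := by
    intro m
    have h2 := Em_tendsto q m ρs ρ hconv
    calc limsup (fun n => Ent q (ρs n)) atTop
        ≤ limsup (fun n => Em q m (ρs n)) atTop :=
          limsup_le_limsup (Eventually.of_forall fun n => ent_le_Em q m _ (hs n))
            (isCoboundedUnder_le_of_le atTop (x := 0) hEnt0)
            h2.isBoundedUnder_le
      _ = Em q m ρ := h2.limsup_eq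
  exact ge_of_tendsto (Em_tendsto_Ent q ρ hρ) (Eventually.of_forall key)
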